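/- Let V be a real-valued potential on ℝ³ satisfying assumption (V), a = |V|^{1/2}, b = |V|^{1/2} sign(V), and set M = Ker(1 + bD_0a), N = Ker(1 + aD_0b) in L²(ℝ³). Then the map φ ↦ a D_0 a φ is a linear isomorphism from M onto N, the map ψ ↦ b D_0 b ψ is a linear isomorphism from N onto M, and these two maps are inverses of each other. -/

import Mathlib

open MeasureTheory Complex Filter Topology Set

noncomputable section

/-- Euclidean space `ℝ³`. -/
abbrev R3 := EuclideanSpace ℝ (Fin 3)

/-- `L²(ℝ³; ℂ)`. -/
abbrev L2 : Type := MeasureTheory.Lp ℂ 2 (volume : Measure R3)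

/-- Assumption (V): `⟨x⟩² V ∈ (L^p ∩ L^q)(ℝ³)` for some `p < 3/2` and `q > 3`. -/
def AssumptionV (V : R3 → ℝ) (p q : ℝ) : Prop :=
  1 ≤ p ∧ p < 3 / 2 ∧ 3 < q ∧
    MemLp (fun x => (1 + ‖x‖ ^ 2) * V x) (ENNReal.ofReal p) (volume : Measure R3) ∧
    MemLp (fun x => (1 + ‖x‖ ^ 2) * V x) (ENNReal.ofReal q) (volume : Measure R3)

/-- With `M = Ker(1 + bD₀a)` and `N = Ker(1 + aD₀b)`, the map
`φ ↦ aD₀aφ` is a linear isomorphism of `M` onto `N`, the map `ψ ↦ bD₀bψ` is a linear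
isomorphism of `N` onto `M`, and they are inverses of each other. -/
theorem aD0a_bD0b_mutually_inverse
    (V : R3 → ℝ) (p q : ℝ) (hV : AssumptionV V p q)
    (a b : R3 → ℝ)
    (ha : a = fun x => Real.sqrt |V x|)
    (hb : b = fun x => Real.sqrt |V x| * Real.sign (V x))
    (Tba Tab Taa Tbb : L2 →L[ℂ] L2)
    (hTba : ∀ f : L2, ⇑(Tba f) =ᵐ[volume] fun x => ∫ y : R3,
      (b x : ℂ) * (a y : ℂ) / (4 * (Real.pi : ℂ) * (‖x - y‖ : ℝ)) * f y)
    (hTab : ∀ f : L2, ⇑(Tab f) =ᵐ[volume] fun x => ∫ y : R3,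
      (a x : ℂ) * (b y : ℂ) / (4 * (Real.pi : ℂ) * (‖x - y‖ : ℝ)) * f y)
    (hTaa : ∀ f : L2, ⇑(Taa f) =ᵐ[volume] fun x => ∫ y : R3,
      (a x : ℂ) * (a y : ℂ) / (4 * (Real.pi : ℂ) * (‖x - y‖ : ℝ)) * f y)
    (hTbb : ∀ f : L2, ⇑(Tbb f) =ᵐ[volume] fun x => ∫ y : R3,
      (b x : ℂ) * (b y : ℂ) / (4 * (Real.pi : ℂ) * (‖x - y‖ : ℝ)) * f y) :
    (∀ φ ∈ LinearMap.ker ((1 + Tba : L2 →L[ℂ] L2) : L2 →ₗ[ℂ] L2), Taa φ ∈ LinearMap.ker ((1 + Tab : L2 →L[ℂ] L2) : L2 →ₗ[ℂ] L2)) ∧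
    (∀ ψ ∈ LinearMap.ker ((1 + Tab : L2 →L[ℂ] L2) : L2 →ₗ[ℂ] L2), Tbb ψ ∈ LinearMap.ker ((1 + Tba : L2 →L[ℂ] L2) : L2 →ₗ[ℂ] L2)) ∧
    (∀ φ ∈ LinearMap.ker ((1 + Tba : L2 →L[ℂ] L2) : L2 →ₗ[ℂ] L2), Tbb (Taa φ) = φ) ∧
    (∀ ψ ∈ LinearMap.ker ((1 + Tab : L2 →L[ℂ] L2) : L2 →ₗ[ℂ] L2), Taa (Tbb ψ) = ψ) := by

  classical
  -- pointwise relation between `b` and `a`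
  have hba : ∀ x : R3, (b x : ℂ) = (Real.sign (V x) : ℂ) * (a x : ℂ) := by
    intro x
    rw [ha, hb]
    push_cast
    ring
  -- `Tba f = sign(V) • Taa f` almost everywhere
  have hTbaTaa : ∀ f : L2, ⇑(Tba f) =ᵐ[volume]
      fun y => (Real.sign (V y) : ℂ) * (Taa f) y := by
    intro f
    refine (hTba f).trans ?_
    filter_upwards [hTaa f] with y hy
    rw [hy, ← MeasureTheory.integral_const_mul]
    refine integral_congr_ae (Eventually.of_forall fun z => ?_)
    rw [hba y]
    ring
  -- `Tbb f = sign(V) • Tab f` almost everywhere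
  have hTbbTab : ∀ f : L2, ⇑(Tbb f) =ᵐ[volume]
      fun y => (Real.sign (V y) : ℂ) * (Tab f) y := by
    intro f
    refine (hTbb f).trans ?_
    filter_upwards [hTab f] with y hy
    rw [hy, ← MeasureTheory.integral_const_mul]
    refine integral_congr_ae (Eventually.of_forall fun z => ?_)
    rw [hba y]
    ring
  -- four intertwining identities
  have key1 : ∀ f : L2, Tab (Taa f) = Taa (Tba f) := by
    intro f
    refine Lp.ext (((hTab (Taa f)).trans ?_).trans (hTaa (Tba f)).symm)
    refine Eventually.of_forall fun x => integral_congr_ae ?_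
    filter_upwards [hTbaTaa f] with y hy
    rw [hy, hba y]
    ring
  have key2 : ∀ f : L2, Tbb (Tab f) = Tba (Tbb f) := by
    intro f
    refine Lp.ext (((hTbb (Tab f)).trans ?_).trans (hTba (Tbb f)).symm)
    refine Eventually.of_forall fun x => integral_congr_ae ?_
    filter_upwards [hTbbTab f] with y hy
    rw [hy, hba y]
    ring
  have key3 : ∀ f : L2, Tbb (Taa f) = Tba (Tba f) := by
    intro f
    refine Lp.ext (((hTbb (Taa f)).trans ?_).trans (hTba (Tba f)).symm)
    refine Eventually.of_forall fun x => integral_congr_ae ?_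
    filter_upwards [hTbaTaa f] with y hy
    rw [hy, hba y]
    ring
  have key4 : ∀ f : L2, Taa (Tbb f) = Tab (Tab f) := by
    intro f
    refine Lp.ext (((hTaa (Tbb f)).trans ?_).trans (hTab (Tab f)).symm)
    refine Eventually.of_forall fun x => integral_congr_ae ?_
    filter_upwards [hTbbTab f] with y hy
    rw [hy, hba y]
    ring
  refine ⟨?_, ?_, ?_, ?_⟩
  · intro φ hφ
    rw [LinearMap.mem_ker] at hφ ⊢
    have h0 : φ + Tba φ = 0 := by
      simpa [ContinuousLinearMap.add_apply] using hφ
    calc (1 + Tab) (Taa φ) = Taa φ + Tab (Taa φ) := by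
          simp [ContinuousLinearMap.add_apply]
      _ = Taa φ + Taa (Tba φ) := by rw [key1]
      _ = Taa (φ + Tba φ) := by rw [map_add]
      _ = 0 := by rw [h0, map_zero]
  · intro ψ hψ
    rw [LinearMap.mem_ker] at hψ ⊢
    have h0 : ψ + Tab ψ = 0 := by
      simpa [ContinuousLinearMap.add_apply] using hψ
    calc (1 + Tba) (Tbb ψ) = Tbb ψ + Tba (Tbb ψ) := by
          simp [ContinuousLinearMap.add_apply]
      _ = Tbb ψ + Tbb (Tab ψ) := by rw [key2]
      _ = Tbb (ψ + Tab ψ) := by rw [map_add]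
      _ = 0 := by rw [h0, map_zero]
  · intro φ hφ
    rw [LinearMap.mem_ker] at hφ
    have h0 : φ + Tba φ = 0 := by
      simpa [ContinuousLinearMap.add_apply] using hφ
    have hneg : Tba φ = -φ := by
      have := eq_neg_of_add_eq_zero_right h0
      simpa using this
    rw [key3, hneg, map_neg, hneg, neg_neg]
  · intro ψ hψ
    rw [LinearMap.mem_ker] at hψ
    have h0 : ψ + Tab ψ = 0 := by
      simpa [ContinuousLinearMap.add_apply] using hψ
    have hneg : Tab ψ = -ψ := by
      have := eq_neg_of_add_eq_zero_right h0
      simpa using this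
    rw [key4, hneg, map_neg, hneg, neg_neg]
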